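/- Let A be a Frobenius group of degree n acting transitively on Ω with |A| = n(n-1)/2 or n(n-1) (point stabilizers acting fixed-point-freely outside the fixed point). Then the Frobenius kernel N is an elementary abelian p-group for some prime p; hence n = p^a is a prime power, and if |A| = n(n-1)/2 with n > 2 then p is odd. -/

import Mathlib

open Finset

lemma frob_aux_free_dvd {G : Type*} [Group G] [Fintype G] (S : Subgroup G)
    (T : Finset G) (hinv : ∀ h ∈ S, ∀ x ∈ T, h * x * h⁻¹ ∈ T)
    (hfree : ∀ h ∈ S, ∀ x ∈ T, h * x * h⁻¹ = x → h = 1) :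
    Nat.card S ∣ T.card := by
  classical
  generalize hk : T.card = k
  induction k using Nat.strong_induction_on generalizing T with
  | _ k ih =>
  rcases T.eq_empty_or_nonempty with rfl | ⟨x, hx⟩
  · exact hk ▸ (Finset.card_empty (α:=G) ▸ dvd_zero _)
  · let O : Finset G := (S : Set G).toFinset.image fun h => h * x * h⁻¹
    have hmemO : ∀ y, y ∈ O ↔ ∃ h ∈ S, h * x * h⁻¹ = y := by
      intro y
      simp [O, Finset.mem_image, Set.mem_toFinset]
    have hOsub : O ⊆ T := by
      intro y hy
      obtain ⟨h, hh, rfl⟩ := (hmemO y).1 hy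
      exact hinv h hh x hx
    have hOcard : O.card = Nat.card S := by
      rw [Finset.card_image_of_injOn, Set.toFinset_card, Nat.card_eq_fintype_card]
      · rfl
      · intro h1 h1m h2 h2m heq
        simp only [Finset.mem_coe, Set.mem_toFinset, SetLike.mem_coe] at h1m h2m
        simp only at heq
        have key : (h2⁻¹ * h1) * x * (h2⁻¹ * h1)⁻¹ = x := by
          have := congrArg (fun z => h2⁻¹ * z * h2) heq
          simp only [mul_inv_rev, inv_inv] at this ⊢
          group at this ⊢
          simpa using this
        have := hfree _ (S.mul_mem (S.inv_mem h2m) h1m) x hx key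
        rw [inv_mul_eq_one] at this
        exact this.symm
    have hOne : O.Nonempty := ⟨x, (hmemO x).2 ⟨1, S.one_mem, by group⟩⟩
    have hinv' : ∀ h ∈ S, ∀ y ∈ T \ O, h * y * h⁻¹ ∈ T \ O := by
      intro h hh y hy
      rw [Finset.mem_sdiff] at hy ⊢
      refine ⟨hinv h hh y hy.1, fun hc => hy.2 ?_⟩
      obtain ⟨h', hh', heq⟩ := (hmemO _).1 hc
      refine (hmemO y).2 ⟨h⁻¹ * h', S.mul_mem (S.inv_mem hh) hh', ?_⟩
      have := congrArg (fun z => h⁻¹ * z * h) heq.symm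
      group at this ⊢
      simpa [mul_assoc] using this.symm
    have hlt : (T \ O).card < k := by
      rw [← hk]
      have := Finset.card_sdiff_add_card_eq_card hOsub
      have := Finset.card_pos.2 hOne
      omega
    have hdvd := ih _ hlt (T \ O) hinv' (fun h hh y hy => hfree h hh y (Finset.mem_sdiff.1 hy).1) rfl
    have hsum := Finset.card_sdiff_add_card_eq_card hOsub
    rw [← hk, ← hsum]
    exact dvd_add hdvd (hOcard ▸ dvd_refl _)

/-- let `A` be a Frobenius group of degree `n` (transitive, no nontrivial
element fixes two points, some nontrivial element fixes a point) with `|A| = n(n-1)` or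
`|A| = n(n-1)/2`.  Then the Frobenius kernel (identity together with the derangements)
is an elementary abelian `p`-group, so `n = p^a` is a prime power, and if
`|A| = n(n-1)/2` with `n > 2` then `p` is odd. -/
theorem frobenius_kernel_elementary_abelian
    (A Ω : Type*) [Group A] [Fintype A] [Fintype Ω] [Nonempty Ω] [MulAction A Ω]
    [MulAction.IsPretransitive A Ω]
    (hfrob : ∀ g : A, g ≠ 1 → ∀ ω ω' : Ω, g • ω = ω → g • ω' = ω' → ω = ω')
    (hfix : ∃ g : A, g ≠ 1 ∧ ∃ ω : Ω, g • ω = ω)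
    (horder : Fintype.card A = Fintype.card Ω * (Fintype.card Ω - 1) ∨
      2 * Fintype.card A = Fintype.card Ω * (Fintype.card Ω - 1)) :
    ∃ (p : ℕ) (a : ℕ), p.Prime ∧ Fintype.card Ω = p ^ a ∧
      (∀ g : A, (g = 1 ∨ ∀ ω : Ω, g • ω ≠ ω) → g ^ p = 1) ∧
      (∀ g h : A, (g = 1 ∨ ∀ ω : Ω, g • ω ≠ ω) → (h = 1 ∨ ∀ ω : Ω, h • ω ≠ ω) →
        g * h = h * g) ∧
      ((2 * Fintype.card A = Fintype.card Ω * (Fintype.card Ω - 1) ∧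
          2 < Fintype.card Ω) → Odd p) := by
  classical
  obtain ⟨α⟩ := ‹Nonempty Ω›
  set n := Fintype.card Ω with hn
  -- orbit-stabilizer : every stabilizer has the same cardinality c with c * n = |A|
  have hstabcard : ∀ ω : Ω, Fintype.card (MulAction.stabilizer A ω) * n = Fintype.card A := by
    intro ω
    have horb : Fintype.card (MulAction.orbit A ω) = n := by
      rw [hn]
      exact Fintype.card_congr ((Equiv.setCongr (MulAction.orbit_eq_univ A ω)).trans
        (Equiv.Set.univ Ω))
    have := MulAction.card_orbit_mul_card_stabilizer_eq_card_group A ω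
    rw [horb] at this
    rwa [mul_comm] at this
  set c := Fintype.card (MulAction.stabilizer A α) with hc
  have hcA : c * n = Fintype.card A := hstabcard α
  have hApos : 0 < Fintype.card A := Fintype.card_pos
  have hnpos : 0 < n := Fintype.card_pos
  have hcpos : 0 < c := Fintype.card_pos
  have hn2 : 2 ≤ n := by
    rcases Nat.lt_or_ge n 2 with h | h
    · interval_cases n <;> omega
    · exact h
  -- the derangement finset
  set D : Finset A := univ.filter (fun g => ∀ ω : Ω, g • ω ≠ ω) with hD
  have hmemD : ∀ g : A, g ∈ D ↔ ∀ ω : Ω, g • ω ≠ ω := by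
    intro g; simp [hD]
  have h1D : (1 : A) ∉ D := by
    intro h
    exact (hmemD 1).1 h α (one_smul A α)
  have hDconj : ∀ (a : A), ∀ g ∈ D, a * g * a⁻¹ ∈ D := by
    intro a g hg
    rw [hmemD] at hg ⊢
    intro ω hω
    refine hg (a⁻¹ • ω) ?_
    have h2 : g • (a⁻¹ • ω) = a⁻¹ • ((a * g * a⁻¹) • ω) := by
      rw [mul_smul, mul_smul, inv_smul_smul]
    rw [h2, hω]
  -- cardinality of each stabilizer as a finset
  have hstabFcard : ∀ ω : Ω, (univ.filter fun g : A => g • ω = ω).card = c := by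
    intro ω
    have h1 : Fintype.card (MulAction.stabilizer A ω)
        = (univ.filter fun g : A => g • ω = ω).card :=
      Fintype.card_of_subtype _ (by intro g; simp [MulAction.mem_stabilizer_iff])
    have h2 := hstabcard ω
    rw [h1] at h2
    have h3 := hcA
    exact Nat.eq_of_mul_eq_mul_right hnpos (h2.trans h3.symm)
  -- counting the elements with a fixed point
  set F : Finset A := univ.filter (fun g : A => g ≠ 1 ∧ ∃ ω : Ω, g • ω = ω) with hF
  have hFcard : F.card = n * (c - 1) := by
    have hFeq : F = Finset.univ.biUnion
        (fun ω : Ω => (univ.filter fun g : A => g • ω = ω).erase 1) := by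
      ext g
      simp only [hF, Finset.mem_filter, Finset.mem_biUnion, Finset.mem_erase, Finset.mem_univ,
        true_and]
      constructor
      · rintro ⟨h1, ω, hω⟩; exact ⟨ω, h1, hω⟩
      · rintro ⟨ω, h1, hω⟩; exact ⟨h1, ω, hω⟩
    rw [hFeq, Finset.card_biUnion]
    · have heach : ∀ ω : Ω, ((univ.filter fun g : A => g • ω = ω).erase 1).card = c - 1 := by
        intro ω
        rw [Finset.card_erase_of_mem, hstabFcard ω]
        exact Finset.mem_filter.2 ⟨Finset.mem_univ _, one_smul A ω⟩
      rw [Finset.sum_congr rfl fun ω _ => heach ω, Finset.sum_const, smul_eq_mul,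
        Finset.card_univ]
    · intro ω _ ω' _ hne
      rw [Function.onFun, Finset.disjoint_left]
      intro g hg hg'
      rw [Finset.mem_erase, Finset.mem_filter] at hg hg'
      exact hne (hfrob g hg.1 ω ω' hg.2.2 hg'.2.2)
  have hcover : (univ : Finset A) = insert 1 (F ∪ D) := by
    ext g
    constructor
    · intro _
      rw [Finset.mem_insert, Finset.mem_union]
      by_cases h1 : g = 1
      · exact Or.inl h1
      · by_cases h2 : ∃ ω : Ω, g • ω = ω
        · exact Or.inr (Or.inl (Finset.mem_filter.2 ⟨Finset.mem_univ _, h1, h2⟩))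
        · push_neg at h2
          exact Or.inr (Or.inr ((hmemD g).2 h2))
    · intro _; exact Finset.mem_univ g
  have hdisjFD : Disjoint F D := by
    rw [Finset.disjoint_left]
    intro g hg hgD
    obtain ⟨-, ω, hω⟩ := (Finset.mem_filter.1 hg).2
    exact (hmemD g).1 hgD ω hω
  have h1FD : (1:A) ∉ F ∪ D := by
    rw [Finset.mem_union]
    rintro (h | h)
    · exact ((Finset.mem_filter.1 h).2.1) rfl
    · exact h1D h
  have hcardA' : Fintype.card A = 1 + (F.card + D.card) := by
    rw [← Finset.card_univ, hcover, Finset.card_insert_of_notMem h1FD,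
      Finset.card_union_of_disjoint hdisjFD]
    omega
  have hDcard : D.card = n - 1 := by
    have hnc : n * c = n * (c - 1) + n := by
      have hc1 : c - 1 + 1 = c := by omega
      calc n * c = n * ((c - 1) + 1) := by rw [hc1]
        _ = n * (c - 1) + n := by ring
    have hcomm : c * n = n * c := mul_comm c n
    omega
  -- centralizer of a derangement consists of 1 and derangements
  have hcent : ∀ g ∈ D, ∀ x : A, x * g = g * x → x = 1 ∨ x ∈ D := by
    intro g hg x hxg
    by_cases hx1 : x = 1
    · exact Or.inl hx1
    · refine Or.inr ((hmemD x).2 fun ω hfixx => ?_)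
      have h2 : x • (g • ω) = g • ω := by
        rw [← mul_smul, hxg, mul_smul, hfixx]
      have := hfrob x hx1 ω (g • ω) hfixx h2
      exact (hmemD g).1 hg ω this.symm
  -- the stabilizer acts freely on derangements by conjugation
  have hfreeS : ∀ h ∈ MulAction.stabilizer A α, ∀ x ∈ D, h * x * h⁻¹ = x → h = 1 := by
    intro h hh x hx heq
    by_contra hne
    have hcm : h * x = x * h := by
      simpa using congrArg (· * h) heq
    have hα : h • α = α := hh
    have hfixed : h • (x • α) = x • α := by
      rw [← mul_smul, hcm, mul_smul, hα]
    have := hfrob h hne α (x • α) hα hfixed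
    exact (hmemD x).1 hx α this.symm
  have hcstab : Nat.card (MulAction.stabilizer A α) = c := Nat.card_eq_fintype_card
  -- class equation : the centralizer of any derangement is {1} ∪ D
  have hinscard : (insert (1:A) D).card = n := by
    rw [Finset.card_insert_of_notMem h1D, hDcard]; omega
  have hkey : ∀ g ∈ D, (univ.filter fun x : A => x * g = g * x) = insert 1 D := by
    intro g hg
    set CgF := univ.filter fun x : A => x * g = g * x with hCgF
    set clT := univ.image fun a : A => a * g * a⁻¹ with hclT
    have hfib : ∀ y ∈ clT, (univ.filter fun a : A => a * g * a⁻¹ = y).card = CgF.card := by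
      intro y hy
      obtain ⟨b, -, rfl⟩ := Finset.mem_image.1 hy
      apply Finset.card_bij' (i := fun a _ => b⁻¹ * a) (j := fun x _ => b * x)
      · -- maps into CgF
        intro a ha
        have heq : a * g * a⁻¹ = b * g * b⁻¹ := (Finset.mem_filter.1 ha).2
        have h1 : (b⁻¹ * a) * g * (b⁻¹ * a)⁻¹ = g := by
          have h0 : b⁻¹ * (a * g * a⁻¹) * b = b⁻¹ * (b * g * b⁻¹) * b := by rw [heq]
          group at h0 ⊢
          simpa using h0
        rw [mul_inv_eq_iff_eq_mul] at h1
        exact Finset.mem_filter.2 ⟨Finset.mem_univ _, h1⟩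
      · -- maps back into the fiber
        intro x hxm
        have hx : x * g = g * x := (Finset.mem_filter.1 hxm).2
        refine Finset.mem_filter.2 ⟨Finset.mem_univ _, ?_⟩
        have h1 : x * g * x⁻¹ = g := by rw [hx]; group
        have : (b * x) * g * (b * x)⁻¹ = b * (x * g * x⁻¹) * b⁻¹ := by group
        rw [this, h1]
      · intro a _; group
      · intro x _; group
    have htot : Fintype.card A = clT.card * CgF.card := by
      rw [← Finset.card_univ,
        Finset.card_eq_sum_card_fiberwise (f := fun a : A => a * g * a⁻¹) (t := clT)
          (fun a _ => Finset.mem_image_of_mem _ (Finset.mem_univ a)),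
        Finset.sum_congr rfl hfib, Finset.sum_const, smul_eq_mul]
    have hsub : clT ⊆ D := by
      intro y hy
      obtain ⟨a, -, rfl⟩ := Finset.mem_image.1 hy
      exact hDconj a g hg
    have hinvcl : ∀ h ∈ MulAction.stabilizer A α, ∀ x ∈ clT, h * x * h⁻¹ ∈ clT := by
      intro h hh x hx
      obtain ⟨a, -, rfl⟩ := Finset.mem_image.1 hx
      refine Finset.mem_image.2 ⟨h * a, Finset.mem_univ _, ?_⟩
      group
    have hdvd : c ∣ clT.card := by
      rw [← hcstab]
      exact frob_aux_free_dvd _ clT hinvcl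
        (fun h hh x hx => hfreeS h hh x (hsub hx))
    have hle : clT.card ≤ n - 1 := hDcard ▸ Finset.card_le_card hsub
    have hclpos : 0 < clT.card := Finset.card_pos.2
      ⟨g, Finset.mem_image.2 ⟨1, Finset.mem_univ _, by group⟩⟩
    have hCgsub : CgF ⊆ insert 1 D := by
      intro x hx
      rcases hcent g hg x (Finset.mem_filter.1 hx).2 with h | h
      · exact h ▸ Finset.mem_insert_self 1 D
      · exact Finset.mem_insert_of_mem h
    have hCgle : CgF.card ≤ n := hinscard ▸ Finset.card_le_card hCgsub
    obtain ⟨m, hm⟩ := hdvd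
    have hmn : m * CgF.card = n := by
      have h1 : c * (m * CgF.card) = c * n := by
        calc c * (m * CgF.card) = (c * m) * CgF.card := by ring
          _ = clT.card * CgF.card := by rw [← hm]
          _ = Fintype.card A := htot.symm
          _ = c * n := hcA.symm
      exact Nat.eq_of_mul_eq_mul_left hcpos h1
    have hmpos : 0 < m := by
      rcases Nat.eq_zero_or_pos m with h | h
      · rw [h, mul_zero] at hm; omega
      · exact h
    have hCgn : CgF.card = n := by
      rcases horder with hcase | hcase
      · -- c = n - 1
        have hceq : c = n - 1 := by
          have h2 : n * c = n * (n - 1) := by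
            rw [mul_comm n c, hcA]; exact hcase
          exact Nat.eq_of_mul_eq_mul_left hnpos h2
        have hmle : m ≤ 1 := by
          by_contra hm2
          push_neg at hm2
          have h3 : c * 2 ≤ c * m := Nat.mul_le_mul_left c hm2
          omega
        have hm1 : m = 1 := by omega
        rw [hm1, one_mul] at hmn
        exact hmn
      · -- 2c = n - 1 and n odd
        have hceq : 2 * c = n - 1 := by
          have h1 : 2 * (c * n) = n * (n - 1) := by rw [hcA]; exact hcase
          have h2 : n * (2 * c) = n * (n - 1) := by rw [← h1]; ring
          exact Nat.eq_of_mul_eq_mul_left hnpos h2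
        have hm2 : m ≤ 2 := by
          by_contra hm3
          push_neg at hm3
          have h3 : c * 3 ≤ c * m := Nat.mul_le_mul_left c hm3
          omega
        interval_cases m
        · omega
        · omega
    exact Finset.eq_of_subset_of_card_le hCgsub (by omega)
  -- all kernel elements commute
  have hcommK : ∀ x y : A, x ∈ insert (1:A) D → y ∈ insert (1:A) D → x * y = y * x := by
    intro x y hx hy
    rcases Finset.mem_insert.1 hy with rfl | hyD
    · simp
    · rw [← hkey y hyD, Finset.mem_filter] at hx
      exact hx.2
  -- pick a derangement
  have hDne : D.Nonempty := by
    rw [← Finset.card_pos, hDcard]; omega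
  obtain ⟨g0, hg0⟩ := hDne
  -- the kernel as a subgroup: centralizer of g0
  set N := Subgroup.centralizer {g0} with hNdef
  have hmemN : ∀ x : A, x ∈ N ↔ x ∈ insert (1:A) D := by
    intro x
    rw [hNdef, Subgroup.mem_centralizer_iff]
    constructor
    · intro h
      have h0 := h g0 (Set.mem_singleton g0)
      have hx : x ∈ univ.filter fun x : A => x * g0 = g0 * x :=
        Finset.mem_filter.2 ⟨Finset.mem_univ _, h0.symm⟩
      exact hkey g0 hg0 ▸ hx
    · intro h y hy
      rw [Set.mem_singleton_iff] at hy
      subst hy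
      exact (hcommK x y h (Finset.mem_insert_of_mem hg0)).symm
  have hNcard : Nat.card N = n := by
    rw [Nat.card_eq_fintype_card]
    rw [Fintype.card_of_subtype (insert (1:A) D) (fun x => (hmemN x).symm)]
    exact hinscard
  -- the prime
  set q := n.minFac with hqdef
  have hq : q.Prime := Nat.minFac_prime (by omega)
  have hqdvdn : q ∣ n := Nat.minFac_dvd n
  haveI : Fact q.Prime := ⟨hq⟩
  -- element of order q in N
  obtain ⟨x0, hx0⟩ : ∃ x : N, orderOf x = q := by
    apply exists_prime_orderOf_dvd_card'
    rw [hNcard]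
    exact hqdvdn
  have hx0A : orderOf (x0 : A) = q := by
    rw [← hx0]
    exact orderOf_injective N.subtype N.subtype_injective x0
  have hx0ne : (x0 : A) ≠ 1 := by
    intro h
    rw [h, orderOf_one] at hx0A
    exact hq.one_lt.ne' hx0A.symm
  have hx0pow : (x0 : A) ^ q = 1 := by
    rw [← hx0A]; exact pow_orderOf_eq_one _
  -- the subgroup of elements of N with y^q = 1
  set Q : Subgroup A :=
    { carrier := {y | y ∈ N ∧ y ^ q = 1}
      one_mem' := ⟨N.one_mem, one_pow q⟩
      mul_mem' := by
        intro a b ha hb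
        refine ⟨N.mul_mem ha.1 hb.1, ?_⟩
        have hcm : Commute a b := hcommK a b ((hmemN a).1 ha.1) ((hmemN b).1 hb.1)
        rw [hcm.mul_pow, ha.2, hb.2, one_mul]
      inv_mem' := by
        intro a ha
        refine ⟨N.inv_mem ha.1, ?_⟩
        rw [inv_pow, ha.2, inv_one] } with hQdef
  have hmemQ : ∀ y : A, y ∈ Q ↔ y ∈ N ∧ y ^ q = 1 := fun y => Iff.rfl
  have hQle : Q ≤ N := fun y hy => hy.1
  have hQdvd : Nat.card Q ∣ n := hNcard ▸ Subgroup.card_dvd_of_le hQle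
  have hQF : (univ.filter fun y : A => y ∈ Q).card = Nat.card Q := by
    rw [Nat.card_eq_fintype_card]
    exact (Fintype.card_of_subtype _ (by intro y; simp)).symm
  set QmF : Finset A := (univ.filter fun y : A => y ∈ Q).erase 1 with hQmF
  have hQm_subD : QmF ⊆ D := by
    intro y hy
    rw [hQmF] at hy
    rw [Finset.mem_erase, Finset.mem_filter] at hy
    rcases Finset.mem_insert.1 ((hmemN y).1 (hQle hy.2.2)) with h | h
    · exact absurd h hy.1
    · exact h
  have hQm_inv : ∀ h ∈ MulAction.stabilizer A α, ∀ y ∈ QmF, h * y * h⁻¹ ∈ QmF := by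
    intro h hh y hy
    have hyD : y ∈ D := hQm_subD hy
    have hyQ : y ∈ Q := (Finset.mem_filter.1 (Finset.mem_of_mem_erase hy)).2
    have hconjD : h * y * h⁻¹ ∈ D := hDconj h y hyD
    rw [hQmF]
    rw [Finset.mem_erase, Finset.mem_filter]
    refine ⟨fun heq => h1D (heq ▸ hconjD), Finset.mem_univ _, ?_⟩
    refine (hmemQ _).2 ⟨(hmemN _).2 (Finset.mem_insert_of_mem hconjD), ?_⟩
    rw [conj_pow, ((hmemQ y).1 hyQ).2, mul_one, mul_inv_cancel]
  have hQm_dvd : c ∣ QmF.card := by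
    rw [← hcstab]
    exact frob_aux_free_dvd _ QmF hQm_inv
      (fun h hh y hy => hfreeS h hh y (hQm_subD hy))
  have hQm_card : QmF.card = Nat.card Q - 1 := by
    rw [hQmF, Finset.card_erase_of_mem
      (Finset.mem_filter.2 ⟨Finset.mem_univ _, Q.one_mem⟩), hQF]
  have hQm_ne : QmF.Nonempty := by
    refine ⟨(x0 : A), ?_⟩
    rw [hQmF, Finset.mem_erase, Finset.mem_filter]
    exact ⟨hx0ne, Finset.mem_univ _, (hmemQ _).2 ⟨x0.2, hx0pow⟩⟩
  -- |Q| = n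
  have hQn : Nat.card Q = n := by
    obtain ⟨m, hm⟩ := hQm_dvd
    have hQpos : 0 < Nat.card Q := Nat.card_pos
    have hQmpos : 0 < QmF.card := Finset.card_pos.2 hQm_ne
    have hmpos : 0 < m := by
      rcases Nat.eq_zero_or_pos m with h | h
      · rw [h, mul_zero] at hm; omega
      · exact h
    have hQlen : Nat.card Q ≤ n := Nat.le_of_dvd hnpos hQdvd
    rcases horder with hcase | hcase
    · have hceq : c = n - 1 := by
        have h2 : n * c = n * (n - 1) := by
          rw [mul_comm n c, hcA]; exact hcase
        exact Nat.eq_of_mul_eq_mul_left hnpos h2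
      have h5 : c * 1 ≤ c * m := Nat.mul_le_mul_left c hmpos
      omega
    · have hceq : 2 * c = n - 1 := by
        have h1 : 2 * (c * n) = n * (n - 1) := by rw [hcA]; exact hcase
        have h2 : n * (2 * c) = n * (n - 1) := by rw [← h1]; ring
        exact Nat.eq_of_mul_eq_mul_left hnpos h2
      have hDQ : QmF.card ≤ n - 1 := hDcard ▸ Finset.card_le_card hQm_subD
      have hm2 : m ≤ 2 := by
        by_contra hm3
        push_neg at hm3
        have h3 : c * 3 ≤ c * m := Nat.mul_le_mul_left c hm3
        omega
      interval_cases m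
      · -- m = 1 : |Q| = c + 1 and |Q| ∣ n = 2c+1 leads to contradiction
        exfalso
        have hQc : Nat.card Q = c + 1 := by omega
        have h2Q : 2 * Nat.card Q = n + 1 := by omega
        have hd1 : Nat.card Q ∣ 2 * Nat.card Q - n := Nat.dvd_sub (Dvd.intro 2 (mul_comm _ _)) hQdvd
        rw [h2Q] at hd1
        have hd2 : Nat.card Q ∣ 1 := by
          have he : n + 1 - n = 1 := by omega
          rwa [he] at hd1
        have := Nat.le_of_dvd one_pos hd2
        omega
      · omega
  -- Q = N as finsets, so every kernel element has order dividing q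
  have hexp : ∀ y : A, y ∈ insert (1:A) D → y ^ q = 1 := by
    have hsub : (univ.filter fun y : A => y ∈ Q) ⊆ univ.filter fun y : A => y ∈ N := by
      intro y hy
      exact Finset.mem_filter.2 ⟨Finset.mem_univ _, hQle (Finset.mem_filter.1 hy).2⟩
    have hNF : (univ.filter fun y : A => y ∈ N).card = Nat.card N := by
      rw [Nat.card_eq_fintype_card]
      exact (Fintype.card_of_subtype _ (by intro y; simp)).symm
    have hcards : (univ.filter fun y : A => y ∈ N).card
        ≤ (univ.filter fun y : A => y ∈ Q).card := by omega
    have heq := Finset.eq_of_subset_of_card_le hsub hcards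
    intro y hy
    have hyN : y ∈ univ.filter fun y : A => y ∈ N :=
      Finset.mem_filter.2 ⟨Finset.mem_univ _, (hmemN y).2 hy⟩
    rw [← heq] at hyN
    exact ((Finset.mem_filter.1 hyN).2).2
  -- n is a power of q
  have hprime_unique : ∀ r : ℕ, r.Prime → r ∣ n → r = q := by
    intro r hr hrdvd
    haveI : Fact r.Prime := ⟨hr⟩
    obtain ⟨y0, hy0⟩ : ∃ y : N, orderOf y = r := by
      apply exists_prime_orderOf_dvd_card'
      rw [hNcard]
      exact hrdvd
    have hy0A : orderOf (y0 : A) = r := by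
      rw [← hy0]
      exact orderOf_injective N.subtype N.subtype_injective y0
    have hy0pow : (y0 : A) ^ q = 1 := hexp _ ((hmemN _).1 y0.2)
    have : r ∣ q := hy0A ▸ orderOf_dvd_of_pow_eq_one hy0pow
    exact (Nat.prime_dvd_prime_iff_eq hr hq).1 this
  have hnpow : n = q ^ n.primeFactorsList.length :=
    Nat.eq_prime_pow_of_unique_prime_dvd (by omega)
      (fun {d} hd hdvd => hprime_unique d hd hdvd)
  -- conclusion
  refine ⟨q, n.primeFactorsList.length, hq, hnpow, ?_, ?_, ?_⟩
  · intro g hg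
    rcases hg with rfl | hg
    · exact one_pow q
    · exact hexp g (Finset.mem_insert_of_mem ((hmemD g).2 hg))
  · intro g h hg hh
    have hg' : g ∈ insert (1:A) D := by
      rcases hg with rfl | hg
      · exact Finset.mem_insert_self 1 D
      · exact Finset.mem_insert_of_mem ((hmemD g).2 hg)
    have hh' : h ∈ insert (1:A) D := by
      rcases hh with rfl | hh
      · exact Finset.mem_insert_self 1 D
      · exact Finset.mem_insert_of_mem ((hmemD h).2 hh)
    exact hcommK g h hg' hh'
  · rintro ⟨hcase, hgt⟩
    have hceq : 2 * c = n - 1 := by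
      have h1 : 2 * (c * n) = n * (n - 1) := by rw [hcA]; exact hcase
      have h2 : n * (2 * c) = n * (n - 1) := by rw [← h1]; ring
      exact Nat.eq_of_mul_eq_mul_left hnpos h2
    have hqodd : q ≠ 2 := by
      intro h2
      rw [h2] at hqdvdn
      omega
    exact hq.odd_of_ne_two hqodd
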